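/- Let A ∈ ℝᴺˣᴺ be symmetric with xᵀAx ≤ 0 for all x, and let H be diagonal positive definite with Q₋ + Q₊ᵀ = 0 where Q± = HD±. Then for the linear system ∂ₜu = −(A_x ⊗ D)u + (1/2)(Γ ⊗ (D₊−D₋))u with A_x ∈ ℝᵐˣᵐ symmetric constant, D = (D₊+D₋)/2, and Γ = γ I_m with γ ≥ 0, the discrete energy ‖u‖²_{I_m⊗H} is non-increasing along solutions: d/dt ‖u‖²_{I⊗H} = γ Σᵢ ⟨uᵢ, (D₊−D₋)uᵢ⟩_H ≤ 0. -/

import Mathlib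

open Matrix

private lemma hasDerivAt_dotH {N : ℕ} (M : Matrix (Fin N) (Fin N) ℝ)
    {f g : ℝ → Fin N → ℝ} {f' g' : Fin N → ℝ} {t : ℝ}
    (hf : HasDerivAt f f' t) (hg : HasDerivAt g g' t) :
    HasDerivAt (fun s => f s ⬝ᵥ M.mulVec (g s))
      (f' ⬝ᵥ M.mulVec (g t) + f t ⬝ᵥ M.mulVec g') t := by
  have hfc := fun k => hasDerivAt_pi.mp hf k
  have hgc := fun k => hasDerivAt_pi.mp hg k
  have h : HasDerivAt (fun s => ∑ k, ∑ l, f s k * (M k l * g s l))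
      (∑ k, ∑ l, (f' k * (M k l * g t l) + f t k * (M k l * g' l))) t := by
    apply HasDerivAt.fun_sum; intro k _
    apply HasDerivAt.fun_sum; intro l _
    exact (hfc k).mul ((hgc l).const_mul (M k l))
  convert h using 1
  · ext s; simp [dotProduct, mulVec, Finset.mul_sum]
  · simp [dotProduct, mulVec, Finset.mul_sum, Finset.sum_add_distrib]

private lemma sum_dot {ι N : Type*} [Fintype N] (s : Finset ι) (f : ι → N → ℝ) (z : N → ℝ) :
    (∑ j ∈ s, f j) ⬝ᵥ z = ∑ j ∈ s, f j ⬝ᵥ z := by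
  simp only [dotProduct, Finset.sum_apply, Finset.sum_mul]
  exact Finset.sum_comm

private lemma dot_sum {ι N : Type*} [Fintype N] (s : Finset ι) (z : N → ℝ) (f : ι → N → ℝ) :
    z ⬝ᵥ (∑ j ∈ s, f j) = ∑ j ∈ s, z ⬝ᵥ f j := by
  simp only [dotProduct, Finset.sum_apply, Finset.mul_sum]
  exact Finset.sum_comm

private lemma key_dot {N : ℕ} (M H : Matrix (Fin N) (Fin N) ℝ) (x y : Fin N → ℝ) :
    (M.mulVec x) ⬝ᵥ H.mulVec y = x ⬝ᵥ (Mᵀ*H).mulVec y := by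
  rw [dotProduct_mulVec, dotProduct_mulVec, ← vecMul_vecMul, vecMul_transpose]

theorem semidiscrete_linear_energy_stable (N m : ℕ)
    (Dp Dm H A : Matrix (Fin N) (Fin N) ℝ)
    (hHdiag : ∀ i j, i ≠ j → H i j = 0) (hHpos : ∀ i, 0 < H i i)
    (hperiodic : H * Dm + (H * Dp)ᵀ = 0)
    (hAdef : A = H * (Dp - Dm))
    (hAsym : Aᵀ = A)
    (hAneg : ∀ x : Fin N → ℝ, x ⬝ᵥ A.mulVec x ≤ 0)
    (Ax : Matrix (Fin m) (Fin m) ℝ) (hAx : Axᵀ = Ax)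
    (γ : ℝ) (hγ : 0 ≤ γ)
    (u : ℝ → Fin m → Fin N → ℝ)
    (hode : ∀ t, HasDerivAt u
      (fun i => -(∑ j, Ax i j • ((((1 : ℝ) / 2) • (Dp + Dm)).mulVec (u t j)))
        + (γ / 2) • ((Dp - Dm).mulVec (u t i))) t) :
    ∀ t, HasDerivAt (fun s => ∑ i, (u s i) ⬝ᵥ (H.mulVec (u s i)))
        (γ * ∑ i, (u t i) ⬝ᵥ (H.mulVec ((Dp - Dm).mulVec (u t i)))) t
      ∧ γ * (∑ i, (u t i) ⬝ᵥ (H.mulVec ((Dp - Dm).mulVec (u t i)))) ≤ 0 := by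
  intro t
  set D : Matrix (Fin N) (Fin N) ℝ := ((1 : ℝ)/2) • (Dp + Dm) with hD
  set Dd : Matrix (Fin N) (Fin N) ℝ := Dp - Dm with hDd
  set v : Fin m → Fin N → ℝ := u t with hv
  set w : Fin m → Fin N → ℝ := fun i =>
    -(∑ j, Ax i j • (D.mulVec (v j))) + (γ/2) • (Dd.mulVec (v i)) with hw
  -- symmetry of H
  have Hsym : Hᵀ = H := by
    ext i j
    by_cases h : i = j
    · subst h; simp
    · simp [transpose_apply, hHdiag _ _ h, hHdiag _ _ (Ne.symm h)]
  -- matrix identities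
  have h1 : H * Dm + Dpᵀ * H = 0 := by
    simpa [transpose_mul, Hsym] using hperiodic
  have h2 : Dmᵀ * H + H * Dp = 0 := by
    have := congrArg Matrix.transpose hperiodic
    simpa [transpose_add, transpose_mul, transpose_transpose, Hsym] using this
  have h3 : Dᵀ * H = -(H * D) := by
    rw [hD]
    rw [transpose_smul, transpose_add, smul_mul, Matrix.mul_smul, add_mul, Matrix.mul_add]
    have e1 : Dpᵀ * H = -(H * Dm) := by linear_combination (norm := module) h1
    have e2 : Dmᵀ * H = -(H * Dp) := by linear_combination (norm := module) h2
    rw [e1, e2]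
    module
  have h4 : Ddᵀ * H = H * Dd := by
    have hA : (H * Dd)ᵀ = H * Dd := by rw [← hAdef]; exact hAsym
    rw [← hA, transpose_mul, Hsym]
  -- bilinear-form identities
  have fact1 : ∀ x y : Fin N → ℝ,
      (D.mulVec x) ⬝ᵥ H.mulVec y = -(x ⬝ᵥ H.mulVec (D.mulVec y)) := by
    intro x y
    rw [key_dot, h3, neg_mulVec, dotProduct_neg, mulVec_mulVec]
  have fact2 : ∀ x y : Fin N → ℝ,
      (Dd.mulVec x) ⬝ᵥ H.mulVec y = x ⬝ᵥ H.mulVec (Dd.mulVec y) := by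
    intro x y
    rw [key_dot, h4, ← mulVec_mulVec]
  -- derivative
  have hdu : ∀ i, HasDerivAt (fun s => u s i) (w i) t := fun i =>
    hasDerivAt_pi.mp (hode t) i
  have hder : HasDerivAt (fun s => ∑ i, (u s i) ⬝ᵥ (H.mulVec (u s i)))
      (∑ i, (w i ⬝ᵥ H.mulVec (v i) + v i ⬝ᵥ H.mulVec (w i))) t := by
    apply HasDerivAt.fun_sum
    intro i _
    exact hasDerivAt_dotH H (hdu i) (hdu i)
  -- expansions of the two summand parts
  have expand1 : ∀ i, w i ⬝ᵥ H.mulVec (v i)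
      = ∑ j, Ax i j * (v j ⬝ᵥ H.mulVec (D.mulVec (v i)))
        + (γ/2) * (v i ⬝ᵥ H.mulVec (Dd.mulVec (v i))) := by
    intro i
    rw [hw]
    simp only [add_dotProduct, neg_dotProduct, sum_dot, smul_dotProduct,
      smul_eq_mul, fact1, fact2, mul_neg, Finset.sum_neg_distrib, neg_neg]
  have expand2 : ∀ i, v i ⬝ᵥ H.mulVec (w i)
      = -(∑ j, Ax i j * (v i ⬝ᵥ H.mulVec (D.mulVec (v j))))
        + (γ/2) * (v i ⬝ᵥ H.mulVec (Dd.mulVec (v i))) := by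
    intro i
    rw [hw]
    rw [dotProduct_mulVec]
    simp only [dotProduct_add, dotProduct_neg, dot_sum, dotProduct_smul, smul_eq_mul]
    simp only [← dotProduct_mulVec]
  -- the cancellation
  have cancel : ∑ i, ∑ j, Ax i j * (v j ⬝ᵥ H.mulVec (D.mulVec (v i)))
      = ∑ i, ∑ j, Ax i j * (v i ⬝ᵥ H.mulVec (D.mulVec (v j))) := by
    rw [Finset.sum_comm]
    refine Finset.sum_congr rfl fun i _ => Finset.sum_congr rfl fun j _ => ?_
    have h := congrFun (congrFun hAx i) j
    rw [transpose_apply] at h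
    rw [h]
  have hsum : ∑ i, (w i ⬝ᵥ H.mulVec (v i) + v i ⬝ᵥ H.mulVec (w i))
      = γ * ∑ i, v i ⬝ᵥ H.mulVec (Dd.mulVec (v i)) := by
    have hC : ∑ i, (γ/2) * (v i ⬝ᵥ H.mulVec (Dd.mulVec (v i)))
        = (γ/2) * ∑ i, v i ⬝ᵥ H.mulVec (Dd.mulVec (v i)) := (Finset.mul_sum _ _ _).symm
    simp only [expand1, expand2]
    rw [Finset.sum_add_distrib, Finset.sum_add_distrib, Finset.sum_add_distrib,
      Finset.sum_neg_distrib, cancel, hC]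
    ring
  constructor
  · rw [← hsum]; exact hder
  · apply mul_nonpos_iff.mpr
    left
    refine ⟨hγ, Finset.sum_nonpos fun i _ => ?_⟩
    rw [mulVec_mulVec, ← hAdef]
    exact hAneg (v i)
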